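/- arXiv:1906.04697 — 2 statements merged into one kernel-verified Lean document; each statement's English description precedes it below -/
import Mathlib

section
/- There exists a universal constant c > 0 such that the following holds for any δ ∈ (0,1), number of epochs M ≥ 1, epoch length K ≥ 1, and B > 0. If ‖θ̄ − θ*‖_∞ ≤ B, then the auxiliary process path'₁ = 0, path'_{t+1} = (1−λ_t)·path'_t + λ_t·V'_t, where V'_t = (T(θ̄) − T(θ*)) − (T̂_t(θ̄) − T̂_t(θ*)) and λ_t = 1/(1+(1−γ)t), satisfies (2·Σ_{ℓ=1}^{K} ‖path'_ℓ‖_∞)/(1+(1−γ)K) + ‖path'_{K+1}‖_∞ ≤ (c·B/(1−γ))·√(2·log(8MDK/δ)/(1+(1−γ)K)) with probability at least 1 − δ/(3M). -/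
open MeasureTheory ProbabilityTheory Finset

namespace VRQ

variable {S A : Type} [Fintype S] [Fintype A] [Nonempty S] [Nonempty A]

/-- A finite Markov decision process: transition probabilities and rewards. -/
structure MDP (S A : Type) [Fintype S] [Fintype A] where
  P : S → A → S → ℝ
  P_nonneg : ∀ s a s', 0 ≤ P s a s'
  P_sum_one : ∀ s a, ∑ s', P s a s' = 1
  r : S → A → ℝ

/-- `vmax θ s = max_{a} θ s a`. -/
noncomputable def vmax (θ : S → A → ℝ) (s : S) : ℝ :=
  (Finset.univ : Finset A).sup' Finset.univ_nonempty (θ s)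

/-- Sup-norm over state-action pairs. -/
noncomputable def supNorm (θ : S → A → ℝ) : ℝ :=
  (Finset.univ : Finset (S × A)).sup' Finset.univ_nonempty fun p => |θ p.1 p.2|

/-- The population Bellman operator. -/
noncomputable def bellman (M : MDP S A) (γ : ℝ) (θ : S → A → ℝ) : S → A → ℝ :=
  fun s a => M.r s a + γ * ∑ s', M.P s a s' * vmax θ s'

/-- The empirical Bellman operator built from the sample `X`. -/
noncomputable def empBellman (M : MDP S A) (γ : ℝ) (X : S → A → S) (θ : S → A → ℝ) :
    S → A → ℝ :=
  fun s a => M.r s a + γ * vmax θ (X s a)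

/-- The entrywise standard deviation `σ(θ)(s,a)` of the empirical Bellman operator at `θ`. -/
noncomputable def bellStd (M : MDP S A) (γ : ℝ) (θ : S → A → ℝ) : S → A → ℝ :=
  fun s a => Real.sqrt (γ ^ 2 *
    (∑ s', M.P s a s' * (vmax θ s') ^ 2 - (∑ s', M.P s a s' * vmax θ s') ^ 2))

/-- Monte Carlo approximation `T̃_N` of the Bellman operator from `N` samples. -/
noncomputable def mcBellman (M : MDP S A) (γ : ℝ) (N : ℕ) (Y : ℕ → S → A → S)
    (θ : S → A → ℝ) : S → A → ℝ :=
  fun s a => (N : ℝ)⁻¹ * ∑ i ∈ Finset.range N, empBellman M γ (Y i) θ s a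

/-- Stepsize `λ_k = 1/(1+(1-γ)k)`. -/
noncomputable def stepSize (γ : ℝ) (k : ℕ) : ℝ := 1 / (1 + (1 - γ) * k)

/-- Variance-reduced `Q`-learning iterates within one epoch: `vrIter ... t = θ_{t+1}`,
with `θ₁ = θbar` and `θ_{t+1} = (1-λ_t) θ_t + λ_t (T̂_t(θ_t) - T̂_t(θbar) + rec)`. -/
noncomputable def vrIter (M : MDP S A) (γ : ℝ) (θbar rec : S → A → ℝ)
    (X : ℕ → S → A → S) : ℕ → S → A → ℝ
  | 0 => θbar
  | t + 1 => fun s a =>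
      (1 - stepSize γ (t + 1)) * vrIter M γ θbar rec X t s a +
        stepSize γ (t + 1) *
          (empBellman M γ (X (t + 1)) (vrIter M γ θbar rec X t) s a -
            empBellman M γ (X (t + 1)) θbar s a + rec s a)

/-- One epoch of variance-reduced `Q`-learning. -/
noncomputable def runEpoch (M : MDP S A) (γ : ℝ) (K N : ℕ)
    (X Y : ℕ → S → A → S) (θbar : S → A → ℝ) : S → A → ℝ :=
  vrIter M γ θbar (mcBellman M γ N Y θbar) X K

/-- The full variance-reduced `Q`-learning algorithm: `vrQLearn ... m = θ̄_m`. -/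
noncomputable def vrQLearn (M : MDP S A) (γ : ℝ) (K : ℕ) (Nm : ℕ → ℕ)
    (X Y : ℕ → ℕ → S → A → S) (θ0 : S → A → ℝ) : ℕ → S → A → ℝ
  | 0 => θ0
  | m + 1 => runEpoch M γ K (Nm (m + 1)) (X (m + 1)) (Y (m + 1))
      (vrQLearn M γ K Nm X Y θ0 m)

/-- Auxiliary noise process: `path₁ = 0`, `path_{t+1} = (1-λ_t) path_t + λ_t W_t`. -/
noncomputable def auxPath (γ : ℝ) (W : ℕ → S → A → ℝ) : ℕ → S → A → ℝ
  | 0 => fun _ _ => 0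
  | t + 1 =>
      if t = 0 then fun _ _ => 0
      else fun s a => (1 - stepSize γ t) * auxPath γ W t s a + stepSize γ t * W t s a

/-- `X : Ω → S → A → S` is a generative-model sample: each coordinate `X ω s a`
is distributed according to `P(· | s,a)`. -/
def IsSample {Ω : Type} [MeasurableSpace Ω] [MeasurableSpace S] (μ : Measure Ω)
    (M : MDP S A) (X : Ω → S → A → S) : Prop :=
  (∀ s a, Measurable fun ω => X ω s a) ∧
    ∀ s a s', μ {ω | X ω s a = s'} = ENNReal.ofReal (M.P s a s')

/-- Policy transition operator `P^π`. -/
noncomputable def polOp (M : MDP S A) (π : S → A) (u : S → A → ℝ) : S → A → ℝ :=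
  fun s a => ∑ s', M.P s a s' * u s' (π s')

/-- The resolvent `(I - γ P^π)⁻¹ = Σ_{k≥0} γ^k (P^π)^k`. -/
noncomputable def resolvent (M : MDP S A) (γ : ℝ) (π : S → A) (u : S → A → ℝ) :
    S → A → ℝ :=
  fun s a => ∑' k : ℕ, γ ^ k * (polOp M π)^[k] u s a



/-! ### Auxiliary lemmas for the proof of `stmt10` -/

section Hoeffding

open Real

lemma exp_le_cosh_add (t c z : ℝ) (hc : 0 < c) (hz : |z| ≤ c) :
    Real.exp (t * z) ≤ Real.cosh (t * c) + (z / c) * Real.sinh (t * c) := by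
  have hz1 : -c ≤ z := (abs_le.1 hz).1
  have hz2 : z ≤ c := (abs_le.1 hz).2
  have h1 : (0:ℝ) ≤ (c - z) / (2 * c) := by
    apply div_nonneg (by linarith) (by linarith)
  have h2 : (0:ℝ) ≤ (c + z) / (2 * c) := by
    have : 0 ≤ c + z := by linarith
    positivity
  have hsum : (c - z) / (2 * c) + (c + z) / (2 * c) = 1 := by
    field_simp; ring
  have := convexOn_exp.2 (Set.mem_univ (t * (-c))) (Set.mem_univ (t * c)) h1 h2 hsum
  have hcne : c ≠ 0 := ne_of_gt hc
  have heq : (c - z) / (2 * c) * (t * (-c)) + (c + z) / (2 * c) * (t * c) = t * z := by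
    field_simp
    ring
  simp only [smul_eq_mul] at this
  rw [heq] at this
  refine this.trans (le_of_eq ?_)
  simp only [Real.cosh_eq, Real.sinh_eq, Real.exp_neg, mul_neg]
  field_simp
  ring

lemma hoeffding_mgf {Ω : Type} [MeasurableSpace Ω] (μ : Measure Ω) [IsProbabilityMeasure μ]
    (Z : Ω → ℝ) (hZm : Measurable Z) (c : ℝ) (hc : 0 ≤ c) (hb : ∀ ω, |Z ω| ≤ c)
    (hmean : ∫ ω, Z ω ∂μ = 0) (t : ℝ) :
    mgf Z μ t ≤ Real.exp (t ^ 2 * c ^ 2 / 2) := by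
  rcases eq_or_lt_of_le hc with hc0 | hc0
  · have hZ0 : ∀ ω, Z ω = 0 := fun ω => by
      have := hb ω; rw [← hc0] at this; exact abs_eq_zero.1 (le_antisymm this (abs_nonneg _))
    have : mgf Z μ t = 1 := by
      unfold mgf
      simp only [hZ0, mul_zero, Real.exp_zero, integral_const, measure_univ,
        ENNReal.toReal_one, smul_eq_mul, mul_one, probReal_univ]
    rw [this]
    exact Real.one_le_exp (by positivity)
  · have hZint : Integrable Z μ := by
      refine Integrable.mono' (integrable_const c) hZm.aestronglyMeasurable ?_
      exact Filter.Eventually.of_forall hb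
    have hbound : ∀ ω, Real.exp (t * Z ω) ≤
        Real.cosh (t * c) + (Z ω / c) * Real.sinh (t * c) :=
      fun ω => exp_le_cosh_add t c (Z ω) hc0 (hb ω)
    have hint1 : Integrable (fun ω => Real.exp (t * Z ω)) μ := by
      refine Integrable.mono' (integrable_const (Real.exp (|t| * c)))
        (hZm.const_mul t).exp.aestronglyMeasurable ?_
      refine Filter.Eventually.of_forall fun ω => ?_
      rw [Real.norm_eq_abs, abs_of_nonneg (Real.exp_nonneg _), Real.exp_le_exp]
      calc t * Z ω ≤ |t * Z ω| := le_abs_self _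
        _ = |t| * |Z ω| := abs_mul _ _
        _ ≤ |t| * c := mul_le_mul_of_nonneg_left (hb ω) (abs_nonneg t)
    have hint2 : Integrable (fun ω => Real.cosh (t * c) + (Z ω / c) * Real.sinh (t * c)) μ := by
      apply Integrable.add (integrable_const _)
      exact ((hZint.div_const c).mul_const _)
    calc mgf Z μ t = ∫ ω, Real.exp (t * Z ω) ∂μ := rfl
      _ ≤ ∫ ω, (Real.cosh (t * c) + (Z ω / c) * Real.sinh (t * c)) ∂μ :=
          integral_mono hint1 hint2 hbound
      _ = Real.cosh (t * c) := by
          rw [integral_add (integrable_const _) ((hZint.div_const c).mul_const _),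
            integral_const]
          simp only [measure_univ, ENNReal.toReal_one, smul_eq_mul, one_mul, probReal_univ]
          rw [integral_mul_const, integral_div, hmean]
          simp
      _ ≤ Real.exp ((t * c) ^ 2 / 2) := Real.cosh_le_exp_half_sq _
      _ = Real.exp (t ^ 2 * c ^ 2 / 2) := by ring_nf

lemma integrable_exp_mul_of_bounded {Ω : Type} [MeasurableSpace Ω] (μ : Measure Ω)
    [IsProbabilityMeasure μ] (Z : Ω → ℝ) (hZm : Measurable Z) (c : ℝ)
    (hb : ∀ ω, |Z ω| ≤ c) (t : ℝ) :
    Integrable (fun ω => Real.exp (t * Z ω)) μ := by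
  refine Integrable.mono' (integrable_const (Real.exp (|t| * c)))
    (hZm.const_mul t).exp.aestronglyMeasurable ?_
  refine Filter.Eventually.of_forall fun ω => ?_
  rw [Real.norm_eq_abs, abs_of_nonneg (Real.exp_nonneg _), Real.exp_le_exp]
  calc t * Z ω ≤ |t * Z ω| := le_abs_self _
    _ = |t| * |Z ω| := abs_mul _ _
    _ ≤ |t| * c := mul_le_mul_of_nonneg_left (hb ω) (abs_nonneg t)

lemma chernoff_abs {Ω : Type} [MeasurableSpace Ω] (μ : Measure Ω) [IsProbabilityMeasure μ]
    (Y : ℕ → Ω → ℝ) (hind : iIndepFun Y μ)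
    (hm : ∀ j, Measurable (Y j)) (c : ℕ → ℝ) (hc : ∀ j, 0 ≤ c j)
    (hb : ∀ j ω, |Y j ω| ≤ c j) (hmean : ∀ j, ∫ ω, Y j ω ∂μ = 0)
    (T : Finset ℕ) (v : ℝ) (hv : 0 < v) (hvle : ∑ j ∈ T, (c j)^2 ≤ v)
    (ε : ℝ) (hε : 0 ≤ ε) :
    (μ {ω | ε ≤ |∑ j ∈ T, Y j ω|}).toReal ≤ 2 * Real.exp (-ε^2/(2*v)) := by
  set t : ℝ := ε / v with ht
  have ht0 : 0 ≤ t := div_nonneg hε hv.le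
  have hmgf : ∀ u : ℝ, mgf (∑ j ∈ T, Y j) μ u ≤ Real.exp (u ^ 2 * v / 2) := by
    intro u
    rw [iIndepFun.mgf_sum hind hm T]
    calc ∏ j ∈ T, mgf (Y j) μ u ≤ ∏ j ∈ T, Real.exp (u ^ 2 * (c j) ^ 2 / 2) := by
          apply Finset.prod_le_prod (fun j _ => mgf_nonneg)
          exact fun j _ => hoeffding_mgf μ (Y j) (hm j) (c j) (hc j) (hb j) (hmean j) u
      _ = Real.exp (∑ j ∈ T, u ^ 2 * (c j) ^ 2 / 2) := by rw [Real.exp_sum]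
      _ ≤ Real.exp (u ^ 2 * v / 2) := by
          rw [Real.exp_le_exp]
          have : ∑ j ∈ T, u ^ 2 * (c j) ^ 2 / 2 = u ^ 2 * (∑ j ∈ T, (c j)^2) / 2 := by
            rw [Finset.mul_sum, Finset.sum_div]
          rw [this]
          nlinarith [sq_nonneg u]
  have hint : ∀ u : ℝ, Integrable (fun ω => Real.exp (u * (∑ j ∈ T, Y j) ω)) μ := by
    intro u
    exact iIndepFun.integrable_exp_mul_sum hind hm
      (fun j _ => integrable_exp_mul_of_bounded μ (Y j) (hm j) (c j) (hb j) u)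
  have hup : (μ {ω | ε ≤ (∑ j ∈ T, Y j) ω}).toReal ≤ Real.exp (-ε^2/(2*v)) := by
    calc (μ {ω | ε ≤ (∑ j ∈ T, Y j) ω}).toReal
        ≤ Real.exp (-t * ε) * mgf (∑ j ∈ T, Y j) μ t :=
          measure_ge_le_exp_mul_mgf ε ht0 (hint t)
      _ ≤ Real.exp (-t * ε) * Real.exp (t ^ 2 * v / 2) :=
          mul_le_mul_of_nonneg_left (hmgf t) (Real.exp_nonneg _)
      _ = Real.exp (-t * ε + t ^ 2 * v / 2) := (Real.exp_add _ _).symm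
      _ = Real.exp (-ε^2/(2*v)) := by
          congr 1
          rw [ht]
          field_simp
          ring
  have hdown : (μ {ω | (∑ j ∈ T, Y j) ω ≤ -ε}).toReal ≤ Real.exp (-ε^2/(2*v)) := by
    calc (μ {ω | (∑ j ∈ T, Y j) ω ≤ -ε}).toReal
        ≤ Real.exp (-(-t) * (-ε)) * mgf (∑ j ∈ T, Y j) μ (-t) :=
          measure_le_le_exp_mul_mgf (-ε) (neg_nonpos.2 ht0) (hint (-t))
      _ ≤ Real.exp (-(-t) * (-ε)) * Real.exp ((-t) ^ 2 * v / 2) :=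
          mul_le_mul_of_nonneg_left (hmgf (-t)) (Real.exp_nonneg _)
      _ = Real.exp (-(-t) * (-ε) + (-t) ^ 2 * v / 2) := (Real.exp_add _ _).symm
      _ = Real.exp (-ε^2/(2*v)) := by
          congr 1
          rw [ht]
          field_simp
          ring
  have hsub : {ω | ε ≤ |∑ j ∈ T, Y j ω|} ⊆
      {ω | ε ≤ (∑ j ∈ T, Y j) ω} ∪ {ω | (∑ j ∈ T, Y j) ω ≤ -ε} := by
    intro ω hω
    simp only [Set.mem_setOf_eq] at hω
    by_cases h : 0 ≤ ∑ j ∈ T, Y j ω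
    · left
      simp only [Set.mem_setOf_eq, Finset.sum_apply]
      rwa [abs_of_nonneg h] at hω
    · right
      simp only [Set.mem_setOf_eq, Finset.sum_apply]
      push_neg at h
      rw [abs_of_neg h] at hω
      linarith
  calc (μ {ω | ε ≤ |∑ j ∈ T, Y j ω|}).toReal
      ≤ (μ ({ω | ε ≤ (∑ j ∈ T, Y j) ω} ∪ {ω | (∑ j ∈ T, Y j) ω ≤ -ε})).toReal :=
        ENNReal.toReal_mono (measure_ne_top _ _) (measure_mono hsub)
    _ ≤ ((μ {ω | ε ≤ (∑ j ∈ T, Y j) ω}) + μ {ω | (∑ j ∈ T, Y j) ω ≤ -ε}).toReal := by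
        apply ENNReal.toReal_mono (by finiteness) (measure_union_le _ _)
    _ = (μ {ω | ε ≤ (∑ j ∈ T, Y j) ω}).toReal + (μ {ω | (∑ j ∈ T, Y j) ω ≤ -ε}).toReal :=
        ENNReal.toReal_add (measure_ne_top _ _) (measure_ne_top _ _)
    _ ≤ 2 * Real.exp (-ε^2/(2*v)) := by linarith

lemma iIndepFun_reindex {Ω ι κ β : Type} [MeasurableSpace Ω] [mβ : MeasurableSpace β]
    {μ : Measure Ω} {f : ι → Ω → β}
    (h : iIndepFun f μ) (g : κ → ι) (hg : Function.Injective g) :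
    iIndepFun (fun k => f (g k)) μ := by
  rw [iIndepFun_iff_measure_inter_preimage_eq_mul]
  intro T sets hsets
  classical
  set sets' : ι → Set β := fun i =>
    if h : ∃ k ∈ T, g k = i then sets h.choose else Set.univ with hsets'
  have hkey : ∀ k ∈ T, sets' (g k) = sets k := by
    intro k hk
    have hex : ∃ k' ∈ T, g k' = g k := ⟨k, hk, rfl⟩
    simp only [hsets', dif_pos hex]
    have := hex.choose_spec
    have : hex.choose = k := hg this.2
    rw [this]
  have h1 : (⋂ k ∈ T, (fun ω => f (g k) ω) ⁻¹' sets k) =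
      ⋂ i ∈ T.image g, f i ⁻¹' sets' i := by
    ext ω
    simp only [Set.mem_iInter, Finset.mem_image]
    constructor
    · rintro hω i ⟨k, hk, rfl⟩
      rw [hkey k hk]; exact hω k hk
    · intro hω k hk
      have := hω (g k) ⟨k, hk, rfl⟩
      rwa [hkey k hk] at this
  have h2 := h.measure_inter_preimage_eq_mul (T.image g)
    (sets := sets') ?_
  · rw [h1, h2, Finset.prod_image (fun k hk k' hk' hkk' => hg hkk')]
    apply Finset.prod_congr rfl
    intro k hk
    rw [hkey k hk]
  · intro i hi
    by_cases hex : ∃ k ∈ T, g k = i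
    · simp only [hsets', dif_pos hex]
      exact hsets _ hex.choose_spec.1
    · simp only [hsets', dif_neg hex]
      exact MeasurableSet.univ

lemma integral_comp_sample {Ω S : Type} [MeasurableSpace Ω] [Fintype S]
    [MeasurableSpace S] [MeasurableSingletonClass S]
    (μ : Measure Ω) [IsProbabilityMeasure μ] (W : Ω → S) (hW : Measurable W)
    (P : S → ℝ) (hP : ∀ s', 0 ≤ P s') (hμ : ∀ s', μ {ω | W ω = s'} = ENNReal.ofReal (P s'))
    (g : S → ℝ) :
    ∫ ω, g (W ω) ∂μ = ∑ s', P s' * g s' := by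
  have hrw : (fun ω => g (W ω)) =
      fun ω => ∑ s', Set.indicator (W ⁻¹' {s'}) (fun _ => g s') ω := by
    funext ω
    rw [Finset.sum_eq_single (W ω)]
    · simp [Set.indicator_of_mem, Set.mem_preimage]
    · intro s' _ hne
      apply Set.indicator_of_notMem
      simp only [Set.mem_preimage, Set.mem_singleton_iff]
      exact fun h => hne h.symm
    · intro h; exact absurd (Finset.mem_univ _) h
  rw [hrw, integral_finset_sum]
  · apply Finset.sum_congr rfl
    intro s' _
    rw [integral_indicator_const _ (hW (measurableSet_singleton s'))]
    have : W ⁻¹' {s'} = {ω | W ω = s'} := rfl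
    rw [this, measureReal_def, hμ s', smul_eq_mul, ENNReal.toReal_ofReal (hP s'), mul_comm]
  · intro s' _
    exact Integrable.indicator (integrable_const _) (hW (measurableSet_singleton s'))

lemma sum_inv_sqrt_le (b : ℝ) (hb0 : 0 < b) (K : ℕ) :
    ∑ j ∈ Finset.Icc 1 K, (Real.sqrt (1 + b * j))⁻¹ ≤
      2 / b * Real.sqrt (1 + b * K) := by
  induction K with
  | zero => simp; positivity
  | succ n ih =>
    rw [Finset.sum_Icc_succ_top (by omega : 1 ≤ n + 1)]
    have hx : (0:ℝ) ≤ 1 + b * n := by positivity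
    have hy : (0:ℝ) < 1 + b * (n+1:ℕ) := by positivity
    set sx := Real.sqrt (1 + b * n) with hsx
    set sy := Real.sqrt (1 + b * (n+1:ℕ)) with hsy
    have hsx2 : sx ^ 2 = 1 + b * n := Real.sq_sqrt hx
    have hsy2 : sy ^ 2 = 1 + b * (n+1:ℕ) := Real.sq_sqrt hy.le
    have hsy0 : 0 < sy := Real.sqrt_pos.2 hy
    have hsx0 : 0 ≤ sx := Real.sqrt_nonneg _
    have hle : sx ≤ sy := by
      apply Real.sqrt_le_sqrt
      push_cast
      nlinarith
    have hdiff : sy ^ 2 - sx ^ 2 = b := by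
      rw [hsx2, hsy2]; push_cast; ring
    have hkey : sy⁻¹ ≤ 2 / b * (sy - sx) := by
      have h2 : b ≤ 2*(sy-sx)*sy := by nlinarith [sq_nonneg (sy - sx)]
      rw [inv_eq_one_div, div_le_iff₀ hsy0]
      have heq : 2 / b * (sy - sx) * sy = (2*(sy-sx)*sy)/b := by ring
      rw [heq, le_div_iff₀ hb0, one_mul]
      exact h2
    refine le_trans (add_le_add ih hkey) (le_of_eq (by ring))

end Hoeffding

/-! ### weights for the auxiliary path -/

/-- aggregated weights -/
noncomputable def wt (γ : ℝ) (ℓ j : ℕ) : ℝ :=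
  stepSize γ j * ∏ i ∈ Finset.Icc (j + 1) ℓ, (1 - stepSize γ i)

lemma wt_self' {γ : ℝ} (ℓ : ℕ) : wt γ (ℓ + 1) (ℓ + 1) = stepSize γ (ℓ + 1) := by
  rw [wt, Finset.Icc_eq_empty (by omega), Finset.prod_empty, mul_one]

lemma wt_succ_of_le' {γ : ℝ} {ℓ j : ℕ} (h : j ≤ ℓ) :
    wt γ (ℓ + 1) j = (1 - stepSize γ (ℓ + 1)) * wt γ ℓ j := by
  rw [wt, wt, Finset.prod_Icc_succ_top (by omega : j + 1 ≤ ℓ + 1)]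
  ring

section γfacts
variable {γ : ℝ} (hγ0 : 0 < γ) (hγ1 : γ < 1)
include hγ0 hγ1

lemma one_add_pos (k : ℕ) : 0 < 1 + (1 - γ) * k := by
  have : (0:ℝ) ≤ (1 - γ) * k :=
    mul_nonneg (by linarith) (Nat.cast_nonneg k)
  linarith

lemma stepSize_pos (k : ℕ) : 0 < stepSize γ k :=
  div_pos one_pos (one_add_pos hγ0 hγ1 k)

lemma stepSize_le_one (k : ℕ) : stepSize γ k ≤ 1 := by
  rw [stepSize, div_le_one (one_add_pos hγ0 hγ1 k)]
  have : (0:ℝ) ≤ (1 - γ) * k := mul_nonneg (by linarith) (Nat.cast_nonneg k)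
  linarith

lemma one_sub_stepSize_nonneg (k : ℕ) : 0 ≤ 1 - stepSize γ k := by
  linarith [stepSize_le_one hγ0 hγ1 k]

lemma stepSize_mul_le (k : ℕ) :
    stepSize γ k * (1 - stepSize γ (k + 1)) ≤ stepSize γ (k + 1) := by
  have key : ∀ u : ℝ, 0 ≤ u →
      1/(1+(1-γ)*u) * (1 - 1/(1+(1-γ)*(u+1))) ≤ 1/(1+(1-γ)*(u+1)) := by
    intro u hu
    have hx : (0:ℝ) < 1 - γ := by linarith
    have ha : (0:ℝ) < 1 + (1-γ)*u := by nlinarith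
    have hb : (0:ℝ) < 1 + (1-γ)*(u+1) := by nlinarith
    have h1s : (1:ℝ) - 1/(1+(1-γ)*(u+1)) = (1-γ)*(u+1)/(1+(1-γ)*(u+1)) := by
      field_simp
      ring
    rw [h1s, div_mul_div_comm, one_mul, div_le_div_iff₀ (by positivity) hb]
    nlinarith
  have := key k (Nat.cast_nonneg k)
  rw [stepSize, stepSize]
  push_cast
  convert this using 3

lemma wt_pos {ℓ j : ℕ} : 0 < wt γ ℓ j := by
  apply mul_pos (stepSize_pos hγ0 hγ1 j)
  apply Finset.prod_pos
  intro i hi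
  rw [Finset.mem_Icc] at hi
  have hi1 : 1 ≤ i := le_trans (Nat.le_add_left 1 j) hi.1
  rw [stepSize]
  have hpos := one_add_pos hγ0 hγ1 i
  rw [sub_pos, div_lt_one hpos]
  have : (1:ℝ) ≤ (i:ℝ) := by exact_mod_cast hi1
  nlinarith [sub_pos.mpr hγ1]

lemma wt_le_stepSize {ℓ j : ℕ} (hj : 1 ≤ j) (hjl : j ≤ ℓ) :
    wt γ ℓ j ≤ stepSize γ ℓ := by
  induction ℓ with
  | zero => omega
  | succ n ih =>
    rcases Nat.lt_or_ge j (n+1) with h | h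
    · have hle : j ≤ n := by omega
      calc wt γ (n+1) j = (1 - stepSize γ (n+1)) * wt γ n j :=
            wt_succ_of_le' hle
        _ ≤ (1 - stepSize γ (n+1)) * stepSize γ n :=
            mul_le_mul_of_nonneg_left (ih (by omega))
              (one_sub_stepSize_nonneg hγ0 hγ1 _)
        _ ≤ stepSize γ (n+1) := by
            rw [mul_comm]; exact stepSize_mul_le hγ0 hγ1 n
    · have : j = n + 1 := by omega
      subst this
      rw [wt_self']

lemma sum_wt_le_one (ℓ : ℕ) : ∑ j ∈ Finset.Icc 1 ℓ, wt γ ℓ j ≤ 1 := by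
  induction ℓ with
  | zero => simp
  | succ n ih =>
    rw [Finset.sum_Icc_succ_top (by omega : 1 ≤ n + 1)]
    have h1 : ∑ j ∈ Finset.Icc 1 n, wt γ (n+1) j
        = (1 - stepSize γ (n+1)) * ∑ j ∈ Finset.Icc 1 n, wt γ n j := by
      rw [Finset.mul_sum]
      apply Finset.sum_congr rfl
      intro j hj
      rw [Finset.mem_Icc] at hj
      exact wt_succ_of_le' hj.2
    rw [h1, wt_self']
    have h2 := one_sub_stepSize_nonneg hγ0 hγ1 (n+1)
    nlinarith [stepSize_pos hγ0 hγ1 (n+1),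
      mul_le_mul_of_nonneg_left ih h2]

lemma sum_wt_sq_le (ℓ : ℕ) :
    ∑ j ∈ Finset.Icc 1 ℓ, (wt γ ℓ j) ^ 2 ≤ stepSize γ ℓ := by
  calc ∑ j ∈ Finset.Icc 1 ℓ, (wt γ ℓ j) ^ 2
      ≤ ∑ j ∈ Finset.Icc 1 ℓ, stepSize γ ℓ * wt γ ℓ j := by
        apply Finset.sum_le_sum
        intro j hj
        rw [Finset.mem_Icc] at hj
        rw [sq]
        exact mul_le_mul_of_nonneg_right (wt_le_stepSize hγ0 hγ1 hj.1 hj.2)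
          (wt_pos hγ0 hγ1).le
    _ = stepSize γ ℓ * ∑ j ∈ Finset.Icc 1 ℓ, wt γ ℓ j := by rw [Finset.mul_sum]
    _ ≤ stepSize γ ℓ * 1 :=
        mul_le_mul_of_nonneg_left (sum_wt_le_one hγ0 hγ1 ℓ)
          (stepSize_pos hγ0 hγ1 ℓ).le
    _ = stepSize γ ℓ := mul_one _

lemma stepSize_le_four (m : ℕ) : stepSize γ m ≤ 4 * stepSize γ (m+1) := by
  rw [stepSize, stepSize, mul_one_div, div_le_div_iff₀
    (one_add_pos hγ0 hγ1 m) (one_add_pos hγ0 hγ1 (m+1))]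
  push_cast
  nlinarith [Nat.cast_nonneg (α := ℝ) m, sub_pos.mpr hγ1]

end γfacts

/-- closed form for the auxiliary path -/
lemma auxPath_closed (γ : ℝ) (W : ℕ → S → A → ℝ) (t : ℕ) (s : S) (a : A) :
    auxPath γ W (t + 1) s a = ∑ j ∈ Finset.Icc 1 t, wt γ t j * W j s a := by
  induction t with
  | zero => simp [auxPath]
  | succ n ih =>
    show auxPath γ W (n + 1 + 1) s a = _
    rw [auxPath]
    simp only [Nat.succ_ne_zero, if_false]
    rw [ih, Finset.sum_Icc_succ_top (by omega : 1 ≤ n + 1), Finset.mul_sum]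
    rw [wt_self']
    congr 1
    · apply Finset.sum_congr rfl
      intro j hj
      rw [Finset.mem_Icc] at hj
      rw [wt_succ_of_le' hj.2, mul_assoc]

lemma abs_le_supNorm (θ : S → A → ℝ) (s : S) (a : A) : |θ s a| ≤ supNorm θ :=
  Finset.le_sup' (f := fun p : S × A => |θ p.1 p.2|) (Finset.mem_univ (s, a))

lemma supNorm_le {θ : S → A → ℝ} {x : ℝ} (h : ∀ s a, |θ s a| ≤ x) : supNorm θ ≤ x :=
  Finset.sup'_le _ _ fun p _ => h p.1 p.2

lemma vmax_sub_le_of_supNorm {θ1 θ2 : S → A → ℝ} {B : ℝ}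
    (h : supNorm (fun s a => θ1 s a - θ2 s a) ≤ B) (x : S) :
    vmax θ1 x - vmax θ2 x ≤ B := by
  rw [sub_le_iff_le_add, vmax]
  apply Finset.sup'_le
  intro a _
  have h1 : θ1 x a - θ2 x a ≤ B :=
    le_trans (le_trans (le_abs_self _)
      (abs_le_supNorm (fun s a => θ1 s a - θ2 s a) x a)) h
  have h2 : θ2 x a ≤ vmax θ2 x :=
    Finset.le_sup' (θ2 x) (Finset.mem_univ a)
  linarith

lemma abs_vmax_sub_le {θ1 θ2 : S → A → ℝ} {B : ℝ}
    (h : supNorm (fun s a => θ1 s a - θ2 s a) ≤ B) (x : S) :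
    |vmax θ1 x - vmax θ2 x| ≤ B := by
  rw [abs_le]
  constructor
  · have h' : supNorm (fun s a => θ2 s a - θ1 s a) ≤ B := by
      refine le_trans (le_of_eq ?_) h
      unfold supNorm
      congr 1
      funext p
      exact abs_sub_comm _ _
    linarith [vmax_sub_le_of_supNorm h' x]
  · exact vmax_sub_le_of_supNorm h x


set_option maxHeartbeats 2000000 in
/-- Lemma 2: high-probability bound on the noise process `{path'_t}`. -/
theorem stmt10 :
    ∃ c : ℝ, 0 < c ∧
      ∀ (S A : Type) [Fintype S] [Fintype A] [Nonempty S] [Nonempty A]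
        [MeasurableSpace S] [MeasurableSingletonClass S]
        (M : MDP S A) (γ : ℝ), 0 < γ → γ < 1 →
        ∀ θstar : S → A → ℝ, bellman M γ θstar = θstar →
        ∀ δ : ℝ, 0 < δ → δ < 1 → ∀ Mep : ℕ, 1 ≤ Mep → ∀ K : ℕ, 1 ≤ K →
        ∀ B : ℝ, 0 < B →
        ∀ θbar : S → A → ℝ, supNorm (fun s a => θbar s a - θstar s a) ≤ B →
        ∀ (Ω : Type) [MeasurableSpace Ω] (μ : Measure Ω) [IsProbabilityMeasure μ]
          (X : ℕ → Ω → S → A → S),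
          (∀ t, IsSample μ M (X t)) →
          iIndepFun
            (fun p : ℕ × S × A => fun ω => X p.1 ω p.2.1 p.2.2) μ →
        ∀ Vp : Ω → ℕ → S → A → ℝ,
          (∀ ω t s a, Vp ω t s a =
            (bellman M γ θbar s a - bellman M γ θstar s a) -
              (empBellman M γ (X t ω) θbar s a - empBellman M γ (X t ω) θstar s a)) →
        ENNReal.ofReal (1 - δ / (3 * Mep)) ≤
          μ {ω |
            2 * (∑ ℓ ∈ Finset.Icc 1 K, supNorm (auxPath γ (Vp ω) ℓ)) /
                (1 + (1 - γ) * K) +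
              supNorm (auxPath γ (Vp ω) (K + 1)) ≤
            c * B / (1 - γ) *
              Real.sqrt (2 * Real.log ((8 : ℝ) * Mep *
                  (Fintype.card S * Fintype.card A) * K / δ) /
                (1 + (1 - γ) * K))} := by
  refine ⟨18, by norm_num, ?_⟩
  intro S A _ _ _ _ _ _ M γ hγ0 hγ1 θstar hfix δ hδ0 hδ1 Mep hMep K hK B hB θbar hθ
    Ω _ μ _ X hsamp hind Vp hVp
  classical
  have hb0 : (0:ℝ) < 1 - γ := by linarith
  have hb1 : (1:ℝ) - γ ≤ 1 := by linarith
  have hcS : (1:ℝ) ≤ (Fintype.card S : ℝ) := by exact_mod_cast Fintype.card_pos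
  have hcA : (1:ℝ) ≤ (Fintype.card A : ℝ) := by exact_mod_cast Fintype.card_pos
  have hMep1 : (1:ℝ) ≤ (Mep : ℝ) := by exact_mod_cast hMep
  have hK1 : (1:ℝ) ≤ (K : ℝ) := by exact_mod_cast hK
  set L : ℝ := Real.log ((8 : ℝ) * Mep * (Fintype.card S * Fintype.card A) * K / δ)
    with hLdef
  set Dr : ℝ := (Fintype.card S : ℝ) * (Fintype.card A : ℝ) with hDrdef
  have hDr1 : (1:ℝ) ≤ Dr := one_le_mul_of_one_le_of_one_le hcS hcA
  have hprod : (1:ℝ) ≤ (Mep:ℝ) * ((Fintype.card S : ℝ) * (Fintype.card A:ℝ)) * (K:ℝ) := by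
    have h2 : (1:ℝ)*1 ≤ (Mep:ℝ) * ((Fintype.card S : ℝ) * (Fintype.card A:ℝ)) :=
      mul_le_mul hMep1 hDr1 zero_le_one (by linarith)
    have h3 : (1:ℝ)*1 ≤ ((Mep:ℝ) * ((Fintype.card S : ℝ) * (Fintype.card A:ℝ))) * (K:ℝ) :=
      mul_le_mul (by linarith) hK1 zero_le_one (by linarith)
    linarith
  have hRpos : (0:ℝ) < 8 * Mep * (Fintype.card S * Fintype.card A) * K / δ := by
    apply div_pos ?_ hδ0
    nlinarith
  have hR1 : (1:ℝ) ≤ 8 * Mep * (Fintype.card S * Fintype.card A) * K / δ := by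
    rw [le_div_iff₀ hδ0]
    nlinarith
  have hL0 : 0 ≤ L := Real.log_nonneg hR1
  have hexpL : Real.exp (-L) = δ / (8 * Mep * ((Fintype.card S : ℝ) * Fintype.card A) * K) := by
    rw [hLdef, Real.exp_neg, Real.exp_log hRpos, inv_div]
  -- the function of the sample underlying `Vp`
  set G : S → ℝ := fun x => vmax θbar x - vmax θstar x with hGdef
  have hGb : ∀ x, |G x| ≤ B := fun x => abs_vmax_sub_le hθ x
  set C : S → A → ℝ := fun s a => γ * ∑ s', M.P s a s' * G s' with hCdef
  set F : S → A → S → ℝ := fun s a x => C s a - γ * G x with hFdef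
  have hVpF : ∀ ω t s a, Vp ω t s a = F s a (X t ω s a) := by
    intro ω t s a
    rw [hVp ω t s a]
    simp only [hFdef, hCdef, hGdef, bellman, empBellman]
    simp only [mul_sub]
    rw [Finset.sum_sub_distrib]
    ring
  have hCb : ∀ s a, |C s a| ≤ B := by
    intro s a
    simp only [hCdef]
    rw [abs_mul, abs_of_pos hγ0]
    have h1 : |∑ s', M.P s a s' * G s'| ≤ ∑ s', M.P s a s' * B := by
      refine le_trans (Finset.abs_sum_le_sum_abs _ _) ?_
      apply Finset.sum_le_sum
      intro s' _
      rw [abs_mul, abs_of_nonneg (M.P_nonneg s a s')]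
      exact mul_le_mul_of_nonneg_left (hGb s') (M.P_nonneg s a s')
    rw [← Finset.sum_mul, M.P_sum_one, one_mul] at h1
    nlinarith [abs_nonneg (∑ s', M.P s a s' * G s')]
  have hFb : ∀ s a x, |F s a x| ≤ 2 * B := by
    intro s a x
    simp only [hFdef]
    have h1 : |C s a - γ * G x| ≤ |C s a| + |γ * G x| := abs_sub _ _
    have h2 : |γ * G x| ≤ B := by
      rw [abs_mul, abs_of_pos hγ0]
      nlinarith [hGb x, abs_nonneg (G x)]
    linarith [hCb s a]
  have hFmean : ∀ s a, ∑ x, M.P s a x * F s a x = 0 := by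
    intro s a
    simp only [hFdef, mul_sub, Finset.sum_sub_distrib]
    have h1 : ∑ x, M.P s a x * C s a = C s a := by
      rw [← Finset.sum_mul, M.P_sum_one, one_mul]
    have h2 : ∑ x, M.P s a x * (γ * G x) = C s a := by
      simp only [hCdef]
      rw [Finset.mul_sum]
      apply Finset.sum_congr rfl
      intro x _
      ring
    rw [h1, h2, sub_self]
  -- bad events and the Chernoff bound
  set ε : ℕ → ℝ := fun ℓ => 2 * B * Real.sqrt (2 * L * stepSize γ ℓ) with hεdef
  have hε0 : ∀ ℓ, 0 ≤ ε ℓ := fun ℓ => by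
    simp only [hεdef]; positivity
  set bad : ℕ → S → A → Set Ω := fun ℓ s a =>
    {ω | ε ℓ ≤ |∑ j ∈ Finset.Icc 1 ℓ, wt γ ℓ j * F s a (X j ω s a)|} with hbaddef
  have hXm : ∀ (j : ℕ) (s : S) (a : A), Measurable fun ω => X j ω s a :=
    fun j s a => (hsamp j).1 s a
  have hYm : ∀ (ℓ j : ℕ) (s : S) (a : A),
      Measurable fun ω => wt γ ℓ j * F s a (X j ω s a) :=
    fun ℓ j s a => (measurable_of_countable (fun x => wt γ ℓ j * F s a x)).comp (hXm j s a)
  have hbadmeas : ∀ ℓ s a, MeasurableSet (bad ℓ s a) := by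
    intro ℓ s a
    simp only [hbaddef]
    exact measurableSet_le measurable_const
      (Finset.measurable_sum _ (fun j _ => hYm ℓ j s a)).abs
  have hcher : ∀ (ℓ : ℕ), ∀ (s : S) (a : A),
      (μ (bad ℓ s a)).toReal ≤ 2 * Real.exp (-L) := by
    intro ℓ s a
    have hsp := stepSize_pos hγ0 hγ1 ℓ
    have hinj : Function.Injective (fun j : ℕ => ((j, s, a) : ℕ × S × A)) := by
      intro j1 j2 hj
      exact (Prod.mk.injEq _ _ _ _ ▸ hj : _ ∧ _).1
    have hre := iIndepFun_reindex hind (fun j : ℕ => ((j, s, a) : ℕ × S × A)) hinj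
    have hind' : iIndepFun
        (fun j : ℕ => fun ω => wt γ ℓ j * F s a (X j ω s a)) μ :=
      hre.comp (fun j x => wt γ ℓ j * F s a x) (fun j => measurable_of_countable _)
    have hmean : ∀ j, ∫ ω, wt γ ℓ j * F s a (X j ω s a) ∂μ = 0 := by
      intro j
      have hic := integral_comp_sample μ (fun ω => X j ω s a) (hXm j s a) (M.P s a)
        (M.P_nonneg s a) (fun s' => (hsamp j).2 s a s') (fun x => wt γ ℓ j * F s a x)
      rw [hic]
      have heq : ∑ s', M.P s a s' * (wt γ ℓ j * F s a s')
          = wt γ ℓ j * ∑ s', M.P s a s' * F s a s' := by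
        rw [Finset.mul_sum]
        apply Finset.sum_congr rfl
        intro x _
        ring
      rw [heq, hFmean s a, mul_zero]
    have hvle : ∑ j ∈ Finset.Icc 1 ℓ, (wt γ ℓ j * (2*B))^2 ≤ 4 * B^2 * stepSize γ ℓ := by
      have he : ∀ j ∈ Finset.Icc 1 ℓ, (wt γ ℓ j * (2*B))^2 = 4*B^2*(wt γ ℓ j)^2 :=
        fun j _ => by ring
      rw [Finset.sum_congr rfl he, ← Finset.mul_sum]
      exact mul_le_mul_of_nonneg_left (sum_wt_sq_le hγ0 hγ1 ℓ) (by positivity)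
    have hbound := chernoff_abs μ (fun j ω => wt γ ℓ j * F s a (X j ω s a)) hind'
      (fun j => hYm ℓ j s a)
      (fun j => wt γ ℓ j * (2*B))
      (fun j => mul_nonneg (wt_pos hγ0 hγ1).le (by positivity))
      (fun j ω => by
        rw [abs_mul, abs_of_nonneg (wt_pos hγ0 hγ1 (ℓ := ℓ) (j := j)).le]
        exact mul_le_mul_of_nonneg_left (hFb s a _) (wt_pos hγ0 hγ1).le)
      hmean (Finset.Icc 1 ℓ) (4 * B^2 * stepSize γ ℓ)
      (by positivity) hvle (ε ℓ) (hε0 ℓ)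
    have hz : (0:ℝ) ≤ 2 * L * stepSize γ ℓ := by positivity
    have hεsq : (ε ℓ)^2 = 4*B^2*(2*L*stepSize γ ℓ) := by
      simp only [hεdef]
      rw [mul_pow, mul_pow, Real.sq_sqrt hz]
      ring
    have hexp : -(ε ℓ)^2/(2*(4 * B^2 * stepSize γ ℓ)) = -L := by
      rw [hεsq]
      field_simp
    rw [hexp] at hbound
    simp only [hbaddef]
    exact hbound
  -- union bound
  set Bad : Set Ω := ⋃ ℓ ∈ Finset.Icc 1 K, ⋃ p : S × A, bad ℓ p.1 p.2 with hBaddef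
  have hBadmeas : MeasurableSet Bad := by
    simp only [hBaddef]
    apply MeasurableSet.biUnion (Finset.Icc 1 K).countable_toSet
    intro ℓ _
    exact MeasurableSet.iUnion fun p => hbadmeas ℓ p.1 p.2
  have hδ3pos : (0:ℝ) < δ / (3 * Mep) := by positivity
  have hμBad : μ Bad ≤ ENNReal.ofReal (δ / (3 * Mep)) := by
    have h1 : ∀ ℓ (p : S × A), μ (bad ℓ p.1 p.2) ≤ ENNReal.ofReal (2 * Real.exp (-L)) := by
      intro ℓ p
      rw [ENNReal.le_ofReal_iff_toReal_le (measure_ne_top μ _) (by positivity)]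
      exact hcher ℓ p.1 p.2
    calc μ Bad ≤ ∑ ℓ ∈ Finset.Icc 1 K, μ (⋃ p : S × A, bad ℓ p.1 p.2) := by
          simp only [hBaddef]
          exact measure_biUnion_finset_le _ _
      _ ≤ ∑ ℓ ∈ Finset.Icc 1 K, ∑ p ∈ (Finset.univ : Finset (S × A)),
            μ (bad ℓ p.1 p.2) := by
          apply Finset.sum_le_sum
          intro ℓ _
          have hrw : (⋃ p : S × A, bad ℓ p.1 p.2)
              = ⋃ p ∈ (Finset.univ : Finset (S × A)), bad ℓ p.1 p.2 := by
            simp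
          rw [hrw]
          exact measure_biUnion_finset_le _ _
      _ ≤ ∑ ℓ ∈ Finset.Icc 1 K, ∑ p ∈ (Finset.univ : Finset (S × A)),
            ENNReal.ofReal (2 * Real.exp (-L)) := by
          apply Finset.sum_le_sum
          intro ℓ _
          exact Finset.sum_le_sum fun p _ => h1 ℓ p
      _ = (K : ENNReal) * ((Fintype.card S * Fintype.card A : ℕ) : ENNReal)
            * ENNReal.ofReal (2 * Real.exp (-L)) := by
          rw [Finset.sum_const, Finset.sum_const, Nat.card_Icc]
          simp only [Nat.add_sub_cancel, smul_smul, smul_eq_mul]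
          rw [Finset.card_univ, Fintype.card_prod]
          push_cast
          ring
      _ ≤ ENNReal.ofReal (δ / (3 * Mep)) := by
          rw [← ENNReal.ofReal_natCast K, ← ENNReal.ofReal_natCast,
            ← ENNReal.ofReal_mul (by positivity), ← ENNReal.ofReal_mul (by positivity)]
          apply ENNReal.ofReal_le_ofReal
          rw [hexpL]
          push_cast
          have hDrpos : (0:ℝ) < Dr := by linarith
          have hKpos : (0:ℝ) < (K:ℝ) := by linarith
          have hMpos : (0:ℝ) < (Mep:ℝ) := by linarith
          have heq : (K:ℝ) * ((Fintype.card S : ℝ) * (Fintype.card A : ℝ))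
              * (2 * (δ / (8 * Mep * ((Fintype.card S : ℝ) * Fintype.card A) * K)))
              = δ / (4 * Mep) := by
            rw [← hDrdef]
            field_simp
            ring
          rw [heq]
          apply div_le_div_of_nonneg_left hδ0.le (by positivity)
          linarith
  -- the good event implies the desired inequality
  have hgood : Badᶜ ⊆ {ω |
      2 * (∑ ℓ ∈ Finset.Icc 1 K, supNorm (auxPath γ (Vp ω) ℓ)) /
          (1 + (1 - γ) * K) +
        supNorm (auxPath γ (Vp ω) (K + 1)) ≤
      18 * B / (1 - γ) *
        Real.sqrt (2 * L / (1 + (1 - γ) * K))} := by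
    intro ω hω
    simp only [Set.mem_compl_iff] at hω
    have hnb : ∀ ℓ, 1 ≤ ℓ → ℓ ≤ K → ∀ (s : S) (a : A),
        |∑ j ∈ Finset.Icc 1 ℓ, wt γ ℓ j * F s a (X j ω s a)| ≤ ε ℓ := by
      intro ℓ h1 h2 s a
      by_contra hcon
      push_neg at hcon
      apply hω
      simp only [hBaddef]
      apply Set.mem_biUnion (Finset.mem_coe.mpr (Finset.mem_Icc.mpr ⟨h1, h2⟩))
      refine Set.mem_iUnion.mpr ⟨(s, a), ?_⟩
      simp only [hbaddef, Set.mem_setOf_eq]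
      exact hcon.le
    have hpath : ∀ ℓ, 1 ≤ ℓ → ℓ ≤ K →
        supNorm (auxPath γ (Vp ω) (ℓ+1)) ≤ ε ℓ := by
      intro ℓ h1 h2
      apply supNorm_le
      intro s a
      rw [auxPath_closed]
      have hs : ∑ j ∈ Finset.Icc 1 ℓ, wt γ ℓ j * Vp ω j s a
          = ∑ j ∈ Finset.Icc 1 ℓ, wt γ ℓ j * F s a (X j ω s a) := by
        apply Finset.sum_congr rfl
        intro j _
        rw [hVpF]
      rw [hs]
      exact hnb ℓ h1 h2 s a
    have hpath1 : supNorm (auxPath γ (Vp ω) 1) = 0 := by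
      have h0 : auxPath γ (Vp ω) 1 = fun _ _ => (0:ℝ) := by
        simp [auxPath]
      rw [h0]
      unfold supNorm
      simp only [abs_zero]
      exact Finset.sup'_const _ 0
    have hεmono : ∀ m, ε m ≤ 2 * ε (m+1) := by
      intro m
      have hstep : stepSize γ m ≤ 4 * stepSize γ (m+1) := stepSize_le_four hγ0 hγ1 m
      have hsqrt4 : Real.sqrt 4 = 2 := by
        rw [show (4:ℝ) = 2^2 by norm_num, Real.sqrt_sq (by norm_num)]
      calc ε m = 2*B*Real.sqrt (2*L*stepSize γ m) := by simp only [hεdef]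
        _ ≤ 2*B*Real.sqrt (4*(2*L*stepSize γ (m+1))) := by
            apply mul_le_mul_of_nonneg_left _ (by positivity)
            apply Real.sqrt_le_sqrt
            calc 2*L*stepSize γ m ≤ 2*L*(4*stepSize γ (m+1)) :=
                mul_le_mul_of_nonneg_left (stepSize_le_four hγ0 hγ1 m) (by positivity)
              _ = 4*(2*L*stepSize γ (m+1)) := by ring
        _ = 2 * ε (m+1) := by
            rw [Real.sqrt_mul (by norm_num) , hsqrt4]
            simp only [hεdef]
            ring
    have hterm : ∀ ℓ ∈ Finset.Icc 1 K, supNorm (auxPath γ (Vp ω) ℓ) ≤ 2 * ε ℓ := by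
      intro ℓ hℓ
      rw [Finset.mem_Icc] at hℓ
      obtain ⟨m, rfl⟩ : ∃ m, ℓ = m + 1 := ⟨ℓ - 1, by omega⟩
      rcases Nat.eq_zero_or_pos m with rfl | hm
      · rw [zero_add, hpath1]
        positivity
      · calc supNorm (auxPath γ (Vp ω) (m+1)) ≤ ε m :=
            hpath m hm (by omega)
          _ ≤ 2 * ε (m+1) := hεmono m
    -- bounding the sum
    have hsqrtstep : ∀ ℓ : ℕ, Real.sqrt (2*L*stepSize γ ℓ)
        = Real.sqrt (2*L) * (Real.sqrt (1 + (1-γ)*ℓ))⁻¹ := by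
      intro ℓ
      rw [stepSize, mul_one_div, Real.sqrt_div (by positivity), div_eq_mul_inv]
    have hsum : ∑ ℓ ∈ Finset.Icc 1 K, supNorm (auxPath γ (Vp ω) ℓ)
        ≤ 4*B*Real.sqrt (2*L) * (2/(1-γ) * Real.sqrt (1 + (1-γ)*K)) := by
      calc ∑ ℓ ∈ Finset.Icc 1 K, supNorm (auxPath γ (Vp ω) ℓ)
          ≤ ∑ ℓ ∈ Finset.Icc 1 K, 2 * ε ℓ := Finset.sum_le_sum hterm
        _ = ∑ ℓ ∈ Finset.Icc 1 K, 4*B*Real.sqrt (2*L) * (Real.sqrt (1 + (1-γ)*ℓ))⁻¹ := by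
            apply Finset.sum_congr rfl
            intro ℓ _
            simp only [hεdef]
            rw [hsqrtstep ℓ]
            ring
        _ = 4*B*Real.sqrt (2*L) * ∑ ℓ ∈ Finset.Icc 1 K, (Real.sqrt (1 + (1-γ)*ℓ))⁻¹ := by
            rw [Finset.mul_sum]
        _ ≤ 4*B*Real.sqrt (2*L) * (2/(1-γ) * Real.sqrt (1 + (1-γ)*K)) :=
            mul_le_mul_of_nonneg_left (sum_inv_sqrt_le (1-γ) hb0 K) (by positivity)
    have hK2 : supNorm (auxPath γ (Vp ω) (K+1)) ≤
        2*B*Real.sqrt (2*L) * (Real.sqrt (1 + (1-γ)*K))⁻¹ := by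
      refine le_trans (hpath K hK le_rfl) (le_of_eq ?_)
      simp only [hεdef]
      rw [hsqrtstep K]
      ring
    simp only [Set.mem_setOf_eq]
    set Q := Real.sqrt (1 + (1-γ)*K) with hQdef
    have hQ0 : 0 < Q := Real.sqrt_pos.2 (by positivity)
    have hQsq : Q^2 = 1 + (1-γ)*K := Real.sq_sqrt (by positivity)
    set sL := Real.sqrt (2*L) with hsLdef
    have hsL0 : 0 ≤ sL := Real.sqrt_nonneg _
    have hrhs : 18 * B / (1 - γ) * Real.sqrt (2 * L / (1 + (1 - γ) * K))
        = 18*B*sL/((1-γ)*Q) := by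
      rw [Real.sqrt_div (by positivity), ← hQdef, ← hsLdef]
      have h1 : (1-γ) ≠ 0 := ne_of_gt hb0
      have h2 : Q ≠ 0 := ne_of_gt hQ0
      field_simp
    rw [hrhs]
    have ht1 : 2 * (∑ ℓ ∈ Finset.Icc 1 K, supNorm (auxPath γ (Vp ω) ℓ)) / (1 + (1-γ)*K)
        ≤ 16*B*sL/((1-γ)*Q) := by
      rw [div_le_iff₀ (by positivity : (0:ℝ) < 1 + (1-γ)*(K:ℝ))]
      have he : 16*B*sL/((1-γ)*Q) * (1 + (1-γ)*K) = 16*B*sL*Q/(1-γ) := by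
        rw [← hQsq]
        field_simp
      rw [he]
      calc 2 * (∑ ℓ ∈ Finset.Icc 1 K, supNorm (auxPath γ (Vp ω) ℓ))
          ≤ 2 * (4*B*sL * (2/(1-γ) * Q)) := by linarith
        _ = 16*B*sL*Q/(1-γ) := by
            field_simp
            ring
    have ht2 : supNorm (auxPath γ (Vp ω) (K+1)) ≤ 2*B*sL/((1-γ)*Q) := by
      refine le_trans hK2 ?_
      have he2 : 2*B*sL*Q⁻¹ = 2*B*sL/Q := by ring
      rw [he2]
      apply div_le_div_of_nonneg_left (by positivity) (by positivity)
      nlinarith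
    have hsum18 : 16*B*sL/((1-γ)*Q) + 2*B*sL/((1-γ)*Q) = 18*B*sL/((1-γ)*Q) := by
      ring
    linarith
  calc ENNReal.ofReal (1 - δ / (3 * Mep))
      = 1 - ENNReal.ofReal (δ / (3 * Mep)) := by
        rw [ENNReal.ofReal_sub 1 hδ3pos.le, ENNReal.ofReal_one]
    _ ≤ 1 - μ Bad := tsub_le_tsub_left hμBad 1
    _ = μ Badᶜ := (prob_compl_eq_one_sub hBadmeas).symm
    _ ≤ _ := measure_mono hgood

end VRQ
end

section
/- Let θ* be the optimal Q-function for the reward r, and let θ̂ be the optimal Q-function for a perturbed reward r̃ : S×A → ℝ, and let π* be a greedy policy for θ*, i.e. π*(s) ∈ argmax_a θ*(s,a). Then the elementwise positive part satisfies max{θ*(s,a) − θ̂(s,a), 0} ≤ ((I − γP^{π*})^{−1}|r̃ − r|)(s,a) for every state-action pair (s,a), where |r̃ − r| denotes the function (s,a) ↦ |r̃(s,a) − r(s,a)|. -/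
open MeasureTheory ProbabilityTheory Finset

namespace VRQ

variable {S A : Type} [Fintype S] [Fintype A] [Nonempty S] [Nonempty A]

lemma polOp_mono (M : MDP S A) (π : S → A) {f g : S → A → ℝ}
    (h : ∀ s a, f s a ≤ g s a) : ∀ s a, polOp M π f s a ≤ polOp M π g s a := by
  intro s a
  exact Finset.sum_le_sum fun s' _ =>
    mul_le_mul_of_nonneg_left (h s' (π s')) (M.P_nonneg s a s')

lemma polOp_le_const (M : MDP S A) (π : S → A) {f : S → A → ℝ} {C : ℝ}
    (h : ∀ s a, f s a ≤ C) : ∀ s a, polOp M π f s a ≤ C := by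
  intro s a
  calc polOp M π f s a ≤ ∑ s', M.P s a s' * C :=
        Finset.sum_le_sum fun s' _ =>
          mul_le_mul_of_nonneg_left (h s' (π s')) (M.P_nonneg s a s')
    _ = C := by rw [← Finset.sum_mul, M.P_sum_one, one_mul]

lemma polOp_nonneg (M : MDP S A) (π : S → A) {f : S → A → ℝ}
    (h : ∀ s a, 0 ≤ f s a) : ∀ s a, 0 ≤ polOp M π f s a := by
  intro s a
  exact Finset.sum_nonneg fun s' _ => mul_nonneg (M.P_nonneg s a s') (h s' (π s'))

lemma polOp_iter_le_const (M : MDP S A) (π : S → A) {f : S → A → ℝ} {C : ℝ}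
    (h : ∀ s a, f s a ≤ C) : ∀ n s a, (polOp M π)^[n] f s a ≤ C := by
  intro n
  induction n with
  | zero => exact h
  | succ n ih =>
      intro s a
      rw [Function.iterate_succ_apply']
      exact polOp_le_const M π ih s a

lemma polOp_iter_nonneg (M : MDP S A) (π : S → A) {f : S → A → ℝ}
    (h : ∀ s a, 0 ≤ f s a) : ∀ n s a, 0 ≤ (polOp M π)^[n] f s a := by
  intro n
  induction n with
  | zero => exact h
  | succ n ih =>
      intro s a
      rw [Function.iterate_succ_apply']
      exact polOp_nonneg M π ih s a

set_option maxHeartbeats 1000000 in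
/-- Elementwise bound on the positive part `(θ* - θ̂)₊` under a reward perturbation. -/
theorem stmt18 :
    ∀ (S A : Type) [Fintype S] [Fintype A] [Nonempty S] [Nonempty A]
      (M : MDP S A) (γ : ℝ), 0 < γ → γ < 1 →
      ∀ θstar : S → A → ℝ, bellman M γ θstar = θstar →
      ∀ (rt : S → A → ℝ) (θhat : S → A → ℝ),
        bellman { M with r := rt } γ θhat = θhat →
      ∀ πstar : S → A, (∀ s, θstar s (πstar s) = vmax θstar s) →
      ∀ s a, max (θstar s a - θhat s a) 0 ≤
        resolvent M γ πstar (fun s' a' => |rt s' a' - M.r s' a'|) s a := by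
  intro S A _ _ _ _ M γ hγ0 hγ1 θstar hstar rt θhat hhat πstar hπ s a
  set e : S → A → ℝ := fun s a => |rt s a - M.r s a| with he
  set u : S → A → ℝ := fun s a => θstar s a - θhat s a with hu
  have he_nonneg : ∀ s a, 0 ≤ e s a := fun s a => abs_nonneg _
  -- key one-step inequality
  have key : ∀ s a, u s a ≤ e s a + γ * polOp M πstar u s a := by
    intro s a
    have h1 := congrFun (congrFun hstar s) a
    have h2 := congrFun (congrFun hhat s) a
    simp only [bellman] at h1 h2
    have hP : ({ M with r := rt } : MDP S A).P = M.P := rfl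
    rw [hP] at h2
    have h3 : ∀ s', vmax θstar s' - vmax θhat s' ≤ u s' (πstar s') := by
      intro s'
      have hle : θhat s' (πstar s') ≤ vmax θhat s' :=
        Finset.le_sup' (θhat s') (Finset.mem_univ _)
      have := hπ s'
      simp only [hu]
      linarith
    have h4 : ∑ s', M.P s a s' * vmax θstar s' - ∑ s', M.P s a s' * vmax θhat s'
        ≤ polOp M πstar u s a := by
      rw [← Finset.sum_sub_distrib]
      apply Finset.sum_le_sum
      intro s' _
      rw [← mul_sub]
      exact mul_le_mul_of_nonneg_left (h3 s') (M.P_nonneg s a s')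
    have h5 : M.r s a - rt s a ≤ e s a := by
      simp only [he]
      rw [abs_sub_comm]
      exact le_abs_self _
    have h6 := mul_le_mul_of_nonneg_left h4 hγ0.le
    simp only [hu]
    rw [mul_sub] at h6
    linarith
  -- iterated inequality
  have Q : ∀ n s a, (polOp M πstar)^[n] u s a ≤
      (polOp M πstar)^[n] e s a + γ * (polOp M πstar)^[n + 1] u s a := by
    intro n
    induction n with
    | zero => simpa using key
    | succ n ih =>
        intro s a
        rw [Function.iterate_succ_apply' (polOp M πstar) n u]
        refine (polOp_mono M πstar ih s a).trans_eq ?_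
        rw [Function.iterate_succ_apply' (polOp M πstar) (n + 1) u,
          Function.iterate_succ_apply' (polOp M πstar) n e]
        show ∑ s', M.P s a s' * ((polOp M πstar)^[n] e s' (πstar s') +
            γ * (polOp M πstar)^[n + 1] u s' (πstar s')) = _
        simp only [mul_add, Finset.sum_add_distrib, polOp]
        congr 1
        rw [Finset.mul_sum]
        exact Finset.sum_congr rfl fun s' _ => by ring
  -- partial-sum bound
  have R : ∀ n, u s a ≤ (∑ k ∈ Finset.range n, γ ^ k * (polOp M πstar)^[k] e s a) +
      γ ^ n * (polOp M πstar)^[n] u s a := by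
    intro n
    induction n with
    | zero => simp
    | succ n ih =>
        have hq := mul_le_mul_of_nonneg_left (Q n s a) (pow_nonneg hγ0.le n)
        rw [Finset.sum_range_succ]
        have : γ ^ n * (γ * (polOp M πstar)^[n + 1] u s a) =
            γ ^ (n + 1) * (polOp M πstar)^[n + 1] u s a := by ring
        rw [mul_add, this] at hq
        linarith
  -- uniform bounds
  set D : ℝ := supNorm u with hD
  have hub : ∀ s a, u s a ≤ D := fun s a =>
    (le_abs_self _).trans (Finset.le_sup' (fun p => |u p.1 p.2|) (Finset.mem_univ (s, a)))
  have hDn : ∀ n, (polOp M πstar)^[n] u s a ≤ D := fun n =>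
    polOp_iter_le_const M πstar hub n s a
  set B : ℝ := supNorm e with hB
  have heb : ∀ s a, e s a ≤ B := fun s a =>
    (le_abs_self _).trans (Finset.le_sup' (fun p => |e p.1 p.2|) (Finset.mem_univ (s, a)))
  have hterm_nonneg : ∀ k, 0 ≤ γ ^ k * (polOp M πstar)^[k] e s a := fun k =>
    mul_nonneg (pow_nonneg hγ0.le k) (polOp_iter_nonneg M πstar he_nonneg k s a)
  have hsum : Summable fun k => γ ^ k * (polOp M πstar)^[k] e s a := by
    refine Summable.of_nonneg_of_le hterm_nonneg
      (fun k => mul_le_mul_of_nonneg_left (polOp_iter_le_const M πstar heb k s a)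
        (pow_nonneg hγ0.le k))
      ((summable_geometric_of_lt_one hγ0.le hγ1).mul_right B)
  set T : ℝ := ∑' k : ℕ, γ ^ k * (polOp M πstar)^[k] e s a with hT
  have hmain : u s a ≤ T := by
    have hbd : ∀ n, u s a ≤ T + γ ^ n * D := by
      intro n
      refine (R n).trans (add_le_add ?_ (mul_le_mul_of_nonneg_left (hDn n)
        (pow_nonneg hγ0.le n)))
      exact Summable.sum_le_tsum _ (fun k _ => hterm_nonneg k) hsum
    have hlim : Filter.Tendsto (fun n : ℕ => T + γ ^ n * D) Filter.atTop (nhds T) := by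
      have hg : Filter.Tendsto (fun n : ℕ => γ ^ n) Filter.atTop (nhds 0) :=
        tendsto_pow_atTop_nhds_zero_of_lt_one hγ0.le hγ1
      have := (hg.mul_const D).const_add T
      simpa using this
    exact ge_of_tendsto' hlim fun n => hbd n
  have hTnonneg : 0 ≤ T := tsum_nonneg hterm_nonneg
  exact max_le hmain hTnonneg

end VRQ
end
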